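/- For a(t) = t^α with 0 < α ≤ 1 (so b(t) = t^{1/α}, ḃ(t) = (1/α)t^{1/α−1}, b̈(t) = (1/α)(1/α−1)t^{1/α−2}), the general Fermi-speed expression (ȧ(τ)/2)·[ ∫₁^{σ₀} ḃ(a(τ)/√σ)·σ^{−3/2}(σ−1)^{−1/2} dσ + a(τ)∫₁^{σ₀} b̈(a(τ)/√σ)·σ^{−2}(σ−1)^{−1/2} dσ − (a(τ)/σ₀)∫₁^{σ₀} b̈(a(τ)/√σ)·σ^{−1}(σ−1)^{−1/2} dσ ] equals, for every τ > 0 and σ₀ ∈ (1,∞), (1/(2α))·[ ∫₁^{σ₀} σ^{−(1/(2α)+1)}(σ−1)^{−1/2} dσ + ((α−1)/σ₀)∫₁^{σ₀} σ^{−1/(2α)}(σ−1)^{−1/2} dσ ]; in particular the Fermi relative speed of a comoving test particle is independent of τ. -/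

import Mathlib

open Real MeasureTheory Filter Set intervalIntegral

noncomputable section

/-- Synchronous time along the orthogonal spacelike geodesic: t(τ,σ) = b(a(τ)/√σ). -/
def tF (a b : ℝ → ℝ) (τ σ : ℝ) : ℝ := b (a τ / Real.sqrt σ)

/-- Comoving coordinate along the orthogonal spacelike geodesic:
χ(τ,σ) = (1/2)∫₁^σ ḃ(a(τ)/√s) s^{-1/2}(s-1)^{-1/2} ds. -/
def chiF (a b : ℝ → ℝ) (τ σ : ℝ) : ℝ :=
  (1 / 2) * ∫ s in (1:ℝ)..σ, deriv b (a τ / Real.sqrt s) / (Real.sqrt s * Real.sqrt (s - 1))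

/-- Proper arc length along the orthogonal spacelike geodesic:
ρ_τ(σ) = (a(τ)/2)∫₁^σ ḃ(a(τ)/√s) s^{-3/2}(s-1)^{-1/2} ds. -/
def rhoF (a b : ℝ → ℝ) (τ σ : ℝ) : ℝ :=
  (a τ / 2) *
    ∫ s in (1:ℝ)..σ, deriv b (a τ / Real.sqrt s) / (s * Real.sqrt s * Real.sqrt (s - 1))

/-- The general Fermi-speed expression of Theorem 4 (Eq. (40) of the paper). -/
def vFgen (a b : ℝ → ℝ) (τ σ₀ : ℝ) : ℝ :=
  (deriv a τ / 2) *
    ((∫ σ in (1:ℝ)..σ₀, deriv b (a τ / Real.sqrt σ) / (σ * Real.sqrt σ * Real.sqrt (σ - 1))) +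
      a τ *
        (∫ σ in (1:ℝ)..σ₀, deriv (deriv b) (a τ / Real.sqrt σ) / (σ ^ 2 * Real.sqrt (σ - 1))) -
      (a τ / σ₀) *
        (∫ σ in (1:ℝ)..σ₀, deriv (deriv b) (a τ / Real.sqrt σ) / (σ * Real.sqrt (σ - 1))))

/-- Division by a real power of σ: the basic power-combination identity. -/
private lemma rpow_div_aux (τ α σ q k : ℝ) (hτ : 0 < τ) (hσ : 0 < σ) :
    (τ ^ α / Real.sqrt σ) ^ q / σ ^ k = τ ^ (α * q) * σ ^ (-(q / 2) - k) := by
  rw [Real.sqrt_eq_rpow, Real.div_rpow (Real.rpow_nonneg hτ.le _) (Real.rpow_nonneg hσ.le _),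
    ← Real.rpow_mul hτ.le, ← Real.rpow_mul hσ.le, div_div, ← Real.rpow_add hσ,
    div_eq_mul_inv, ← Real.rpow_neg hσ.le]
  ring_nf

/-- Second derivative of a real power function at a positive point. -/
private lemma deriv2_rpow (p x : ℝ) (hx : 0 < x) :
    deriv (deriv (fun t : ℝ => t ^ p)) x = p * (p - 1) * x ^ (p - 2) := by
  have hev : deriv (fun t : ℝ => t ^ p) =ᶠ[nhds x] fun t => p * t ^ (p - 1) := by
    filter_upwards [eventually_gt_nhds hx] with y hy
    exact Real.deriv_rpow_const y p
  rw [hev.deriv_eq,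
    deriv_const_mul _ ((Real.hasDerivAt_rpow_const (p := p - 1) (Or.inl hx.ne')).differentiableAt),
    Real.deriv_rpow_const x]
  have h : p - 1 - 1 = p - 2 := by ring
  rw [h]; ring

/-- for a(t) = t^α (0 < α ≤ 1), the general Fermi-speed expression
reduces to the stated τ-independent formula. -/
theorem fermi_speed_power_law
    (α : ℝ) (hα0 : 0 < α) (hα1 : α ≤ 1) (τ σ₀ : ℝ) (hτ : 0 < τ) (hσ₀ : 1 < σ₀) :
    vFgen (fun t : ℝ => t ^ α) (fun t : ℝ => t ^ (1 / α)) τ σ₀ =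
      (1 / (2 * α)) *
        ((∫ σ in (1:ℝ)..σ₀, σ ^ (-(1 / (2 * α) + 1)) / Real.sqrt (σ - 1)) +
          ((α - 1) / σ₀) * ∫ σ in (1:ℝ)..σ₀, σ ^ (-(1 / (2 * α))) / Real.sqrt (σ - 1)) := by
  have hα : α ≠ 0 := hα0.ne'
  have hτα : (0:ℝ) < τ ^ α := Real.rpow_pos_of_pos hτ α
  have huIcc : Set.uIcc (1:ℝ) σ₀ = Set.Icc 1 σ₀ := Set.uIcc_of_le hσ₀.le
  set I₁ : ℝ := ∫ σ in (1:ℝ)..σ₀, σ ^ (-(1 / (2 * α) + 1)) / Real.sqrt (σ - 1) with hI₁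
  set I₂ : ℝ := ∫ σ in (1:ℝ)..σ₀, σ ^ (-(1 / (2 * α))) / Real.sqrt (σ - 1) with hI₂
  -- common facts for a point σ of the interval
  have hpt : ∀ σ : ℝ, σ ∈ Set.Icc (1:ℝ) σ₀ → 0 < σ ∧ 0 < τ ^ α / Real.sqrt σ := by
    intro σ hσ
    have h0 : (0:ℝ) < σ := lt_of_lt_of_le one_pos hσ.1
    exact ⟨h0, div_pos hτα (Real.sqrt_pos.2 h0)⟩
  -- First integral
  have h1 : (∫ σ in (1:ℝ)..σ₀, deriv (fun t : ℝ => t ^ (1/α)) (τ ^ α / Real.sqrt σ) /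
        (σ * Real.sqrt σ * Real.sqrt (σ - 1)))
      = ((1/α) * τ ^ (1 - α)) * I₁ := by
    rw [hI₁, ← intervalIntegral.integral_const_mul]
    apply intervalIntegral.integral_congr
    intro σ hσ
    rw [huIcc] at hσ
    obtain ⟨h0, hz⟩ := hpt σ hσ
    have hs32 : σ * Real.sqrt σ = σ ^ (3/2 : ℝ) := by
      rw [Real.sqrt_eq_rpow]
      nth_rewrite 1 [← Real.rpow_one σ]
      rw [← Real.rpow_add h0]; norm_num
    have key : deriv (fun t : ℝ => t ^ (1/α)) (τ ^ α / Real.sqrt σ) / (σ * Real.sqrt σ)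
        = ((1/α) * τ ^ (1 - α)) * σ ^ (-(1 / (2 * α) + 1)) := by
      rw [Real.deriv_rpow_const (τ ^ α / Real.sqrt σ), hs32, mul_div_assoc,
        rpow_div_aux τ α σ _ _ hτ h0]
      have e1 : α * (1/α - 1) = 1 - α := by field_simp
      have e2 : -((1/α - 1) / 2) - 3/2 = -(1 / (2 * α) + 1) := by field_simp; ring
      rw [e1, e2]; ring
    show _ / (σ * Real.sqrt σ * Real.sqrt (σ - 1)) = _
    rw [← div_div, key, mul_div_assoc]
  -- Second integral
  have h2 : (∫ σ in (1:ℝ)..σ₀, deriv (deriv (fun t : ℝ => t ^ (1/α))) (τ ^ α / Real.sqrt σ) /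
        (σ ^ 2 * Real.sqrt (σ - 1)))
      = ((1/α) * (1/α - 1) * τ ^ (1 - 2*α)) * I₁ := by
    rw [hI₁, ← intervalIntegral.integral_const_mul]
    apply intervalIntegral.integral_congr
    intro σ hσ
    rw [huIcc] at hσ
    obtain ⟨h0, hz⟩ := hpt σ hσ
    have hs2 : (σ : ℝ) ^ (2 : ℕ) = σ ^ (2 : ℝ) := by
      rw [← Real.rpow_natCast σ 2]; norm_num
    have key : deriv (deriv (fun t : ℝ => t ^ (1/α))) (τ ^ α / Real.sqrt σ) / σ ^ (2:ℕ)
        = ((1/α) * (1/α - 1) * τ ^ (1 - 2*α)) * σ ^ (-(1 / (2 * α) + 1)) := by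
      rw [deriv2_rpow _ _ hz, hs2, mul_div_assoc, rpow_div_aux τ α σ _ _ hτ h0]
      have e1 : α * (1/α - 2) = 1 - 2*α := by field_simp
      have e2 : -((1/α - 2) / 2) - 2 = -(1 / (2 * α) + 1) := by field_simp; ring
      rw [e1, e2]; ring
    show _ / (σ ^ 2 * Real.sqrt (σ - 1)) = _
    rw [← div_div, key, mul_div_assoc]
  -- Third integral
  have h3 : (∫ σ in (1:ℝ)..σ₀, deriv (deriv (fun t : ℝ => t ^ (1/α))) (τ ^ α / Real.sqrt σ) /
        (σ * Real.sqrt (σ - 1)))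
      = ((1/α) * (1/α - 1) * τ ^ (1 - 2*α)) * I₂ := by
    rw [hI₂, ← intervalIntegral.integral_const_mul]
    apply intervalIntegral.integral_congr
    intro σ hσ
    rw [huIcc] at hσ
    obtain ⟨h0, hz⟩ := hpt σ hσ
    have key : deriv (deriv (fun t : ℝ => t ^ (1/α))) (τ ^ α / Real.sqrt σ) / σ
        = ((1/α) * (1/α - 1) * τ ^ (1 - 2*α)) * σ ^ (-(1 / (2 * α))) := by
      rw [deriv2_rpow _ _ hz, mul_div_assoc]
      nth_rewrite 2 [← Real.rpow_one σ]
      rw [rpow_div_aux τ α σ _ _ hτ h0]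
      have e1 : α * (1/α - 2) = 1 - 2*α := by field_simp
      have e2 : -((1/α - 2) / 2) - 1 = -(1 / (2 * α)) := by field_simp; ring
      rw [e1, e2]; ring
    show _ / (σ * Real.sqrt (σ - 1)) = _
    rw [← div_div, key, mul_div_assoc]
  -- derivative of a
  have hda : deriv (fun t : ℝ => t ^ α) τ = α * τ ^ (α - 1) :=
    Real.deriv_rpow_const τ α
  -- put everything together
  rw [vFgen, hda, h1, h2, h3]
  have hτ2 : τ ^ (α - 1) * τ ^ (1 - α) = 1 := by
    rw [← Real.rpow_add hτ]; norm_num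
  have hτ3 : τ ^ (α - 1) * (τ ^ α * τ ^ (1 - 2*α)) = 1 := by
    rw [← Real.rpow_add hτ, ← Real.rpow_add hτ]
    have h : α - 1 + (α + (1 - 2*α)) = 0 := by ring
    rw [h, Real.rpow_zero]
  calc (α * τ ^ (α - 1) / 2) *
        (((1/α) * τ ^ (1 - α)) * I₁ + τ ^ α * (((1/α) * (1/α - 1) * τ ^ (1 - 2*α)) * I₁)
          - τ ^ α / σ₀ * (((1/α) * (1/α - 1) * τ ^ (1 - 2*α)) * I₂))
      = (α / 2) * ((τ ^ (α - 1) * τ ^ (1 - α)) * ((1/α) * I₁)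
          + (τ ^ (α - 1) * (τ ^ α * τ ^ (1 - 2*α))) * ((1/α) * (1/α - 1) * (I₁ - I₂ / σ₀))) := by
        ring
    _ = (1 / (2 * α)) * (I₁ + (α - 1) / σ₀ * I₂) := by
        rw [hτ2, hτ3]; field_simp; ring
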